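/- Let 𝔄 and 𝔅 be Banach algebras, let σ : 𝔄 → 𝔅 be a continuous linear map, and let d : 𝔄 → 𝔅 be a σ-derivation. If the right annihilator of the separating space 𝔖(d) is {0} (i.e., the only x ∈ 𝔅 with ax = 0 for all a ∈ 𝔖(d) is x = 0), then σ is multiplicative: σ(bc) = σ(b)σ(c) for all b, c ∈ 𝔄. -/

import Mathlib

open Filter Topology

/-- The separating space `𝔖(T)` of a linear map `T` between normed spaces: all `z`
for which there is a sequence `yₙ → 0` with `T yₙ → z`. -/
def separatingSpace {A B : Type*} [NonUnitalNormedRing A] [NonUnitalNormedRing B]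
    [NormedSpace ℂ A] [NormedSpace ℂ B] (T : A →ₗ[ℂ] B) : Set B :=
  {z | ∃ y : ℕ → A, Tendsto y atTop (𝓝 0) ∧ Tendsto (fun n => T (y n)) atTop (𝓝 z)}

/-- **Remark 2.4 (first part).** If `𝔄`, `𝔅` are Banach algebras, `σ : 𝔄 → 𝔅` is a
continuous linear map, `d : 𝔄 → 𝔅` is a `σ`-derivation and the right annihilator of
`𝔖(d)` is `{0}`, then `σ` is multiplicative. -/
theorem stmt_2 {A B : Type*} [NonUnitalNormedRing A] [NonUnitalNormedRing B]
    [NormedSpace ℂ A] [NormedSpace ℂ B] [CompleteSpace A] [CompleteSpace B]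
    (σ d : A →ₗ[ℂ] B) (hσ : Continuous σ)
    (hd : ∀ x y : A, d (x * y) = d x * σ y + σ x * d y)
    (hran : ∀ x : B, (∀ a ∈ separatingSpace d, a * x = 0) → x = 0) :
    ∀ b c : A, σ (b * c) = σ b * σ c := by
  intro b c
  have key : σ (b * c) - σ b * σ c = 0 := by
    apply hran
    rintro a ⟨y, hy0, hyd⟩
    have hσy : Tendsto (fun n => σ (y n)) atTop (𝓝 0) := by
      have := (hσ.tendsto 0).comp hy0
      simpa [Function.comp_def] using this
    have hyb : Tendsto (fun n => y n * b) atTop (𝓝 0) := by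
      simpa using hy0.mul_const b
    have hσyb : Tendsto (fun n => σ (y n * b)) atTop (𝓝 0) := by
      have := (hσ.tendsto 0).comp hyb
      simpa [Function.comp_def] using this
    have h1 : Tendsto (fun n => d (y n * (b * c))) atTop (𝓝 (a * σ (b * c))) := by
      have heq1 : ∀ n, d (y n * (b * c)) = d (y n) * σ (b * c) + σ (y n) * d (b * c) :=
        fun n => hd _ _
      simp only [heq1]
      have := (hyd.mul (tendsto_const_nhds (x := σ (b * c)))).add
        (hσy.mul (tendsto_const_nhds (x := d (b * c))))
      simpa using this
    have h2 : Tendsto (fun n => d (y n * (b * c))) atTop (𝓝 (a * σ b * σ c)) := by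
      have heq : ∀ n, d (y n * (b * c)) =
          (d (y n) * σ b + σ (y n) * d b) * σ c + σ (y n * b) * d c := by
        intro n
        rw [show y n * (b * c) = y n * b * c from (mul_assoc _ _ _).symm, hd, hd]
      simp only [heq]
      have := (((hyd.mul (tendsto_const_nhds (x := σ b))).add
        (hσy.mul (tendsto_const_nhds (x := d b)))).mul
        (tendsto_const_nhds (x := σ c))).add
        (hσyb.mul (tendsto_const_nhds (x := d c)))
      simpa using this
    have := tendsto_nhds_unique h1 h2
    rw [mul_sub, this, mul_assoc, sub_self]
  exact sub_eq_zero.mp key
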